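/- In the nonlinear vector model, the disseminated strong-order probability satisfies 𝔭_β(G_so) ≤ (1/π) e^{2β}/(C√p), where G_so is the event that all four bonds of a unit plaquette are strongly ordered. -/

import Mathlib

open Real MeasureTheory Filter Topology
open scoped ENNReal

noncomputable section

/-- The sites of the 2D torus `T_L`. -/
abbrev TorusSite (L : ℕ) := ZMod L × ZMod L

/-- The a priori measure: product over the sites of Lebesgue measure on `(-π, π]`. -/
def torusMeasure (L : ℕ) [NeZero L] : Measure (TorusSite L → ℝ) :=
  Measure.pi (fun _ => volume.restrict (Set.Ioc (-π) π))

lemma constraint_measurable {ι : Type*} [Fintype ι] (g : ι → ι) (δ : ℝ) (t : Finset ι) :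
    MeasurableSet {f : ι → ℝ | ∀ x ∈ t, |f x - f (g x)| ≤ δ} := by
  have h : {f : ι → ℝ | ∀ x ∈ t, |f x - f (g x)| ≤ δ}
      = ⋂ x ∈ (t : Set ι), {f : ι → ℝ | |f x - f (g x)| ≤ δ} := by
    ext f; simp
  rw [h]
  exact MeasurableSet.biInter t.countable_toSet fun x _ =>
    measurableSet_le (((measurable_pi_apply x).sub (measurable_pi_apply (g x))).abs)
      measurable_const

open Finset in
lemma forest_bound {ι : Type*} [Fintype ι] [DecidableEq ι]
    (μ₀ : Measure ℝ) [IsFiniteMeasure μ₀]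
    (g : ι → ι) (r : ι → ℕ) (δ : ℝ) (c : ℝ≥0∞) (hc : c ≠ ⊤)
    (hμ : ∀ a : ℝ, μ₀ {s : ℝ | |s - a| ≤ δ} ≤ c) :
    ∀ t : Finset ι, (∀ x ∈ t, r (g x) < r x) →
    (∫⋯∫⁻_t, ({f : ι → ℝ | ∀ x ∈ t, |f x - f (g x)| ≤ δ}.indicator (fun _ => (1:ℝ≥0∞)))
       ∂(fun _ => μ₀)) ≤ fun _ => c ^ t.card := by
  have hsetm : ∀ a : ℝ, MeasurableSet {s : ℝ | |s - a| ≤ δ} :=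
    fun a => measurableSet_le ((measurable_id.sub measurable_const).abs) measurable_const
  intro t
  induction t using Finset.strongInduction with
  | _ t IH =>
    intro hg
    rcases t.eq_empty_or_nonempty with rfl | hne
    · simp only [lmarginal_empty, card_empty, pow_zero]
      intro f
      by_cases hf : f ∈ {f : ι → ℝ | ∀ x ∈ (∅ : Finset ι), |f x - f (g x)| ≤ δ} <;>
        simp [Set.indicator, hf]
    · obtain ⟨x, hx, hmax⟩ := Finset.exists_max_image t r hne
      have hfmeas : Measurable ({f : ι → ℝ | ∀ z ∈ t, |f z - f (g z)| ≤ δ}.indicator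
          (fun _ => (1:ℝ≥0∞))) := measurable_const.indicator (constraint_measurable g δ t)
      rw [lmarginal_erase' _ hfmeas hx]
      set t' := t.erase x with ht'
      set A' : Set (ι → ℝ) := {f : ι → ℝ | ∀ z ∈ t', |f z - f (g z)| ≤ δ} with hA'
      have hgx : g x ≠ x := by
        intro h
        have := hg x hx
        rw [h] at this
        omega
      have key : ∀ (y : ι → ℝ) (s : ℝ),
          (Function.update y x s ∈ {f : ι → ℝ | ∀ z ∈ t, |f z - f (g z)| ≤ δ})
            ↔ (y ∈ A' ∧ |s - y (g x)| ≤ δ) := by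
        intro y s
        constructor
        · intro h
          refine ⟨fun z hz => ?_, ?_⟩
          · have hz' := h z (mem_of_mem_erase hz)
            have hzx : z ≠ x := ne_of_mem_erase hz
            have hgzx : g z ≠ x := by
              intro e
              have h1 : r (g z) < r z := hg z (mem_of_mem_erase hz)
              have h2 : r z ≤ r x := hmax z (mem_of_mem_erase hz)
              rw [e] at h1; omega
            rwa [Function.update_of_ne hzx, Function.update_of_ne hgzx] at hz'
          · have hz' := h x hx
            rwa [Function.update_self, Function.update_of_ne hgx] at hz'
        · rintro ⟨h1, h2⟩ z hz
          by_cases hzx : z = x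
          · subst hzx
            rwa [Function.update_self, Function.update_of_ne hgx]
          · have hgzx : g z ≠ x := by
              intro e
              have h1' : r (g z) < r z := hg z hz
              have h2' : r z ≤ r x := hmax z hz
              rw [e] at h1'; omega
            rw [Function.update_of_ne hzx, Function.update_of_ne hgzx]
            exact h1 z (mem_erase.mpr ⟨hzx, hz⟩)
      have inner_le : (fun y => ∫⁻ s, ({f : ι → ℝ | ∀ z ∈ t, |f z - f (g z)| ≤ δ}.indicator
            (fun _ => (1:ℝ≥0∞)) (Function.update y x s)) ∂μ₀)
          ≤ fun y => c * A'.indicator (fun _ => (1:ℝ≥0∞)) y := by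
        intro y
        by_cases hy : y ∈ A'
        · have hle : ∀ s : ℝ, ({f : ι → ℝ | ∀ z ∈ t, |f z - f (g z)| ≤ δ}.indicator
              (fun _ => (1:ℝ≥0∞)) (Function.update y x s))
              ≤ ({s : ℝ | |s - y (g x)| ≤ δ}.indicator (fun _ => (1:ℝ≥0∞)) s) := by
            intro s
            by_cases hs : Function.update y x s ∈ {f : ι → ℝ | ∀ z ∈ t, |f z - f (g z)| ≤ δ}
            · have hmem : s ∈ {s : ℝ | |s - y (g x)| ≤ δ} := ((key y s).1 hs).2
              rw [Set.indicator_of_mem hs, Set.indicator_of_mem hmem]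
            · rw [Set.indicator_of_notMem hs]
              exact zero_le
          calc ∫⁻ s, ({f : ι → ℝ | ∀ z ∈ t, |f z - f (g z)| ≤ δ}.indicator
                (fun _ => (1:ℝ≥0∞)) (Function.update y x s)) ∂μ₀
              ≤ ∫⁻ s, ({s : ℝ | |s - y (g x)| ≤ δ}.indicator (fun _ => (1:ℝ≥0∞)) s) ∂μ₀ :=
                lintegral_mono hle
            _ = μ₀ {s : ℝ | |s - y (g x)| ≤ δ} := lintegral_indicator_one (hsetm _)
            _ ≤ c := hμ _
            _ = c * A'.indicator (fun _ => (1:ℝ≥0∞)) y := by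
                rw [Set.indicator_of_mem hy]; simp
        · have hzero : ∀ s : ℝ, ({f : ι → ℝ | ∀ z ∈ t, |f z - f (g z)| ≤ δ}.indicator
              (fun _ => (1:ℝ≥0∞)) (Function.update y x s)) = 0 := by
            intro s
            apply Set.indicator_of_notMem
            intro hs
            exact hy ((key y s).1 hs).1
          simp only [hzero, lintegral_zero, Set.indicator_of_notMem hy, mul_zero, le_refl]
      refine le_trans (lmarginal_mono inner_le) ?_
      have pull : (∫⋯∫⁻_t', (fun y => c * A'.indicator (fun _ => (1:ℝ≥0∞)) y) ∂(fun _ => μ₀))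
          = fun z => c * (∫⋯∫⁻_t', A'.indicator (fun _ => (1:ℝ≥0∞)) ∂(fun _ => μ₀)) z := by
        ext z
        exact lintegral_const_mul' _ _ hc
      rw [pull]
      intro z
      have hsub : t' ⊂ t := Finset.erase_ssubset hx
      have hIH := IH t' hsub (fun w hw => hg w (mem_of_mem_erase hw)) z
      calc c * (∫⋯∫⁻_t', A'.indicator (fun _ => (1:ℝ≥0∞)) ∂(fun _ => μ₀)) z
          ≤ c * c ^ t'.card := mul_le_mul_right hIH c
        _ = c ^ t.card := by
            rw [← Finset.card_erase_add_one hx, pow_succ]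
            ring


instance ioc_finite : IsFiniteMeasure (volume.restrict (Set.Ioc (-π) π)) :=
  ⟨by rw [Measure.restrict_apply_univ]; exact measure_Ioc_lt_top⟩

lemma torus_card (L : ℕ) [NeZero L] : Fintype.card (TorusSite L) = L * L := by
  simp [ZMod.card]

lemma torus_univ (L : ℕ) [NeZero L] :
    torusMeasure L Set.univ = ENNReal.ofReal (2 * π) ^ (L * L) := by
  rw [torusMeasure, Measure.pi_univ]
  have h : (volume.restrict (Set.Ioc (-π) π)) Set.univ = ENNReal.ofReal (2 * π) := by
    rw [Measure.restrict_apply_univ, Real.volume_Ioc]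
    congr 1; ring
  simp only [h, Finset.prod_const, Finset.card_univ, torus_card]

instance torus_finite (L : ℕ) [NeZero L] : IsFiniteMeasure (torusMeasure L) :=
  ⟨by rw [Set.univ, ← Set.univ, torus_univ]; exact ENNReal.pow_lt_top ENNReal.ofReal_lt_top⟩


open Finset in
lemma torus_measure_bound (L : ℕ) [NeZero L] {δ : ℝ} (hδ : 0 ≤ δ) :
    torusMeasure L {φ : TorusSite L → ℝ | ∀ x : TorusSite L, |φ x - φ (x + (1, 0))| ≤ δ}
      ≤ ENNReal.ofReal (2 * δ) ^ (L * L - L) * ENNReal.ofReal (2 * π) ^ L := by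
  classical
  set μ₀ := volume.restrict (Set.Ioc (-π) π) with hμ₀
  set g : TorusSite L → TorusSite L := fun x => x - (1, 0) with hgdef
  set r : TorusSite L → ℕ := fun x => x.1.val with hrdef
  set t : Finset (TorusSite L) := Finset.univ.filter (fun x => x.1 ≠ 0) with htdef
  set M : ℝ≥0∞ := ENNReal.ofReal (2 * π) with hMdef
  set c : ℝ≥0∞ := ENNReal.ofReal (2 * δ) with hcdef
  have hM0 : M ≠ 0 := by
    rw [hMdef, Ne, ENNReal.ofReal_eq_zero, not_le]
    positivity
  have hMtop : M ≠ ⊤ := ENNReal.ofReal_ne_top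
  -- cardinality of t
  have hLL : L ≤ L * L := Nat.le_mul_of_pos_left L (Nat.pos_of_ne_zero (NeZero.ne L))
  have hcard0 : (Finset.univ.filter (fun x : TorusSite L => x.1 = 0)).card = L := by
    have he : (Finset.univ.filter (fun x : TorusSite L => x.1 = 0))
        = {(0 : ZMod L)} ×ˢ (Finset.univ : Finset (ZMod L)) := by
      ext ⟨a, b⟩
      simp [Finset.mem_filter, Finset.mem_product, eq_comm]
    rw [he, Finset.card_product]
    simp [ZMod.card]
  have hcardt : t.card = L * L - L := by
    have hsplit := Finset.card_filter_add_card_filter_not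
      (s := (Finset.univ : Finset (TorusSite L))) (p := fun x => x.1 = 0)
    rw [Finset.card_univ, torus_card] at hsplit
    have : t.card = (Finset.univ.filter (fun x : TorusSite L => ¬ x.1 = 0)).card := rfl
    omega
  -- rank decreases
  have hg : ∀ x ∈ t, r (g x) < r x := by
    intro x hx
    have hx1 : x.1 ≠ 0 := (Finset.mem_filter.mp hx).2
    have hpos : 0 < x.1.val := ZMod.val_pos.mpr hx1
    have hlt : x.1.val < L := ZMod.val_lt x.1
    have hg1 : (g x).1 = x.1 - 1 := rfl
    have hcast : x.1 - 1 = ((x.1.val - 1 : ℕ) : ZMod L) := by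
      have h1 : ((x.1.val : ℕ) : ZMod L) = x.1 := ZMod.natCast_rightInverse x.1
      rw [Nat.cast_sub hpos, Nat.cast_one, h1]
    have : r (g x) = x.1.val - 1 := by
      rw [hrdef]
      simp only [hg1, hcast]
      exact ZMod.val_cast_of_lt (by omega)
    rw [this]
    have hrx : r x = x.1.val := rfl
    omega
  -- bound on the 1D slice measure
  have hμbound : ∀ a : ℝ, μ₀ {s : ℝ | |s - a| ≤ δ} ≤ c := by
    intro a
    have hsub : {s : ℝ | |s - a| ≤ δ} ⊆ Set.Icc (a - δ) (a + δ) := by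
      intro s hs
      rw [Set.mem_setOf_eq, abs_le] at hs
      constructor <;> linarith [hs.1, hs.2]
    calc μ₀ {s : ℝ | |s - a| ≤ δ} ≤ μ₀ (Set.Icc (a - δ) (a + δ)) := measure_mono hsub
      _ ≤ volume (Set.Icc (a - δ) (a + δ)) := by
          rw [hμ₀, Measure.restrict_apply measurableSet_Icc]
          exact measure_mono Set.inter_subset_left
      _ = c := by rw [Real.volume_Icc, hcdef]; congr 1; ring
  -- the constraint set
  set A : Set (TorusSite L → ℝ) := {f | ∀ x ∈ t, |f x - f (g x)| ≤ δ} with hAdef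
  have hAmeas : MeasurableSet A := constraint_measurable g δ t
  have hsubA : {φ : TorusSite L → ℝ | ∀ x : TorusSite L, |φ x - φ (x + (1, 0))| ≤ δ} ⊆ A := by
    intro φ hφ x _
    have h1 := hφ (g x)
    have h2 : g x + (1, 0) = x := sub_add_cancel x (1, 0)
    rw [h2] at h1
    rw [abs_sub_comm]
    exact h1
  have hforest := forest_bound μ₀ g r δ c ENNReal.ofReal_ne_top hμbound t hg
  -- from the marginal bound to a measure bound
  have hmeast : torusMeasure L A ≤ c ^ t.card * M ^ (L * L - t.card) := by
    have h1 : torusMeasure L A = ∫⁻ f, A.indicator (fun _ => (1:ℝ≥0∞)) f ∂(torusMeasure L) :=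
      (lintegral_indicator_one hAmeas).symm
    set K : ℝ≥0∞ := c ^ t.card * (M ^ t.card)⁻¹ with hKdef
    have hKmarg : (∫⋯∫⁻_t, (fun _ => K) ∂(fun _ : TorusSite L => μ₀)) = fun _ => c ^ t.card := by
      ext z
      rw [lmarginal, lintegral_const, Measure.pi_univ]
      have : ∀ i : (t : Finset (TorusSite L)), μ₀ Set.univ = M := fun _ => by
        rw [hμ₀, Measure.restrict_apply_univ, Real.volume_Ioc, hMdef]
        congr 1; ring
      rw [Finset.prod_congr rfl (fun i _ => this i), Finset.prod_const, Finset.card_univ,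
        Fintype.card_coe, hKdef, mul_assoc, ENNReal.inv_mul_cancel
          (pow_ne_zero _ hM0) (ENNReal.pow_ne_top hMtop), mul_one]
    have hle : (∫⋯∫⁻_t, A.indicator (fun _ => (1:ℝ≥0∞)) ∂(fun _ : TorusSite L => μ₀))
        ≤ ∫⋯∫⁻_t, (fun _ => K) ∂(fun _ : TorusSite L => μ₀) := by
      rw [hKmarg]
      exact hforest
    have h2 := lintegral_le_of_lmarginal_le t (measurable_const.indicator hAmeas)
      measurable_const hle
    rw [h1]
    rw [show (Measure.pi (fun _ : TorusSite L => μ₀)) = torusMeasure L from rfl] at h2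
    refine le_trans h2 ?_
    rw [lintegral_const, torus_univ, ← hMdef, hKdef]
    have hcardle : t.card ≤ L * L := by rw [hcardt]; omega
    have hpow : M ^ (L * L) = M ^ t.card * M ^ (L * L - t.card) := by
      rw [← pow_add]
      congr 1
      omega
    rw [hpow, mul_assoc, ← mul_assoc (M ^ t.card)⁻¹, ENNReal.inv_mul_cancel
      (pow_ne_zero _ hM0) (ENNReal.pow_ne_top hMtop), one_mul]
  calc torusMeasure L {φ : TorusSite L → ℝ | ∀ x : TorusSite L, |φ x - φ (x + (1, 0))| ≤ δ}
      ≤ torusMeasure L A := measure_mono hsubA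
    _ ≤ c ^ t.card * M ^ (L * L - t.card) := hmeast
    _ = ENNReal.ofReal (2 * δ) ^ (L * L - L) * ENNReal.ofReal (2 * π) ^ L := by
        rw [hcardt]
        congr 2
        omega

/-- Hamiltonian of the nonlinear vector model. -/
def nlHam (L p : ℕ) [NeZero L] (φ : TorusSite L → ℝ) : ℝ :=
  -∑ x : TorusSite L,
    (((1 + cos (φ x - φ (x + (1, 0)))) / 2) ^ p +
      ((1 + cos (φ x - φ (x + (0, 1)))) / 2) ^ p)

/-- Full torus partition function. -/
def Zfull (L p : ℕ) [NeZero L] (β : ℝ) : ℝ :=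
  ∫ φ : TorusSite L → ℝ, Real.exp (-(β * nlHam L p φ)) ∂(torusMeasure L)

/-- Partition function restricted to all bonds strongly ordered. -/
def Zso (L p : ℕ) [NeZero L] (β C : ℝ) : ℝ :=
  ∫ φ in {φ : TorusSite L → ℝ | ∀ x : TorusSite L,
      |φ x - φ (x + (1, 0))| ≤ 1 / (C * Real.sqrt p) ∧
      |φ x - φ (x + (0, 1))| ≤ 1 / (C * Real.sqrt p)},
    Real.exp (-(β * nlHam L p φ)) ∂(torusMeasure L)

lemma nlHam_bounds (L p : ℕ) [NeZero L] (φ : TorusSite L → ℝ) :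
    0 ≤ -nlHam L p φ ∧ -nlHam L p φ ≤ 2 * (L * L) := by
  have hterm : ∀ θ : ℝ, 0 ≤ ((1 + cos θ) / 2) ^ p ∧ ((1 + cos θ) / 2) ^ p ≤ 1 := by
    intro θ
    have h1 : (0:ℝ) ≤ (1 + cos θ) / 2 := by nlinarith [Real.neg_one_le_cos θ]
    have h2 : (1 + cos θ) / 2 ≤ 1 := by nlinarith [Real.cos_le_one θ]
    exact ⟨pow_nonneg h1 p, pow_le_one₀ h1 h2⟩
  rw [nlHam, neg_neg]
  constructor
  · apply Finset.sum_nonneg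
    intro x _
    have := hterm (φ x - φ (x + (1, 0)))
    have := hterm (φ x - φ (x + (0, 1)))
    nlinarith [(hterm (φ x - φ (x + (1, 0)))).1, (hterm (φ x - φ (x + (0, 1)))).1]
  · calc ∑ x : TorusSite L, (((1 + cos (φ x - φ (x + (1, 0)))) / 2) ^ p +
        ((1 + cos (φ x - φ (x + (0, 1)))) / 2) ^ p)
        ≤ ∑ _x : TorusSite L, (2:ℝ) := by
          apply Finset.sum_le_sum
          intro x _
          have h1 := (hterm (φ x - φ (x + (1, 0)))).2
          have h2 := (hterm (φ x - φ (x + (0, 1)))).2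
          linarith
      _ = 2 * (L * L) := by
          rw [Finset.sum_const, Finset.card_univ, torus_card, nsmul_eq_mul]
          push_cast
          ring

lemma meas_integrand (L p : ℕ) [NeZero L] (β : ℝ) :
    Measurable (fun φ : TorusSite L → ℝ => Real.exp (-(β * nlHam L p φ))) := by
  have h1 : Measurable (fun φ : TorusSite L → ℝ => nlHam L p φ) := by
    unfold nlHam
    apply Measurable.neg
    apply Finset.measurable_sum
    intro x _
    apply Measurable.add <;>
    · apply Measurable.pow_const
      apply Measurable.div_const
      apply Measurable.const_add
      exact Real.measurable_cos.comp ((measurable_pi_apply _).sub (measurable_pi_apply _))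
  exact Real.measurable_exp.comp ((h1.const_mul β).neg)

lemma integrand_bounds (L p : ℕ) [NeZero L] {β : ℝ} (hβ : 0 ≤ β) (φ : TorusSite L → ℝ) :
    1 ≤ Real.exp (-(β * nlHam L p φ)) ∧
      Real.exp (-(β * nlHam L p φ)) ≤ Real.exp (2 * β * (L * L)) := by
  obtain ⟨h1, h2⟩ := nlHam_bounds L p φ
  constructor
  · apply Real.one_le_exp
    nlinarith
  · apply Real.exp_le_exp.mpr
    nlinarith

lemma integrand_integrable (L p : ℕ) [NeZero L] {β : ℝ} (hβ : 0 ≤ β) :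
    Integrable (fun φ : TorusSite L → ℝ => Real.exp (-(β * nlHam L p φ)))
      (torusMeasure L) := by
  refine Integrable.mono' (integrable_const (Real.exp (2 * β * (L * L))))
    (meas_integrand L p β).aestronglyMeasurable ?_
  refine Filter.Eventually.of_forall (fun φ => ?_)
  rw [Real.norm_eq_abs, abs_of_pos (Real.exp_pos _)]
  exact (integrand_bounds L p hβ φ).2

lemma Zfull_lower (L p : ℕ) [NeZero L] {β : ℝ} (hβ : 0 ≤ β) :
    (2 * π) ^ (L * L) ≤ Zfull L p β := by
  have h1 : ∫ _φ : TorusSite L → ℝ, (1:ℝ) ∂(torusMeasure L) ≤ Zfull L p β := by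
    apply integral_mono (integrable_const 1) (integrand_integrable L p hβ)
    intro φ
    exact (integrand_bounds L p hβ φ).1
  rw [integral_const, measureReal_def, torus_univ, smul_eq_mul, mul_one] at h1
  refine le_trans (le_of_eq ?_) h1
  rw [ENNReal.toReal_pow, ENNReal.toReal_ofReal (by positivity)]

lemma Sso_measurable (L : ℕ) [NeZero L] (δ : ℝ) :
    MeasurableSet {φ : TorusSite L → ℝ | ∀ x : TorusSite L,
      |φ x - φ (x + (1, 0))| ≤ δ ∧ |φ x - φ (x + (0, 1))| ≤ δ} := by
  have h : {φ : TorusSite L → ℝ | ∀ x : TorusSite L,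
        |φ x - φ (x + (1, 0))| ≤ δ ∧ |φ x - φ (x + (0, 1))| ≤ δ}
      = ⋂ x : TorusSite L, ({φ : TorusSite L → ℝ | |φ x - φ (x + (1, 0))| ≤ δ}
          ∩ {φ : TorusSite L → ℝ | |φ x - φ (x + (0, 1))| ≤ δ}) := by
    ext φ; simp [Set.mem_iInter, forall_and]
  rw [h]
  refine MeasurableSet.iInter (fun x => MeasurableSet.inter ?_ ?_)
  · exact measurableSet_le
      (((measurable_pi_apply x).sub (measurable_pi_apply (x + (1, 0)))).abs) measurable_const
  · exact measurableSet_le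
      (((measurable_pi_apply x).sub (measurable_pi_apply (x + (0, 1)))).abs) measurable_const

lemma Zso_nonneg (L p : ℕ) [NeZero L] (β C : ℝ) : 0 ≤ Zso L p β C := by
  apply setIntegral_nonneg (Sso_measurable L _)
  intro φ _
  exact (Real.exp_pos _).le

lemma Zso_upper (L p : ℕ) [NeZero L] {β C : ℝ} (hβ : 0 ≤ β)
    (hδ : 0 ≤ 1 / (C * Real.sqrt p)) :
    Zso L p β C ≤ Real.exp (2 * β * (L * L)) *
      ((2 * (1 / (C * Real.sqrt p))) ^ (L * L - L) * (2 * π) ^ L) := by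
  set δ := 1 / (C * Real.sqrt p) with hδdef
  set S := {φ : TorusSite L → ℝ | ∀ x : TorusSite L,
      |φ x - φ (x + (1, 0))| ≤ δ ∧ |φ x - φ (x + (0, 1))| ≤ δ} with hSdef
  have hS : MeasurableSet S := Sso_measurable L δ
  have h1 : Zso L p β C ≤ ∫ _φ in S, Real.exp (2 * β * (L * L)) ∂(torusMeasure L) := by
    apply setIntegral_mono_on ((integrand_integrable L p hβ).integrableOn)
      (integrableOn_const (measure_lt_top _ _).ne) hS
    intro φ _
    exact (integrand_bounds L p hβ φ).2
  rw [setIntegral_const, smul_eq_mul] at h1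
  have h2 : (torusMeasure L S).toReal ≤ (2 * δ) ^ (L * L - L) * (2 * π) ^ L := by
    have hle : torusMeasure L S
        ≤ ENNReal.ofReal (2 * δ) ^ (L * L - L) * ENNReal.ofReal (2 * π) ^ L := by
      refine le_trans (measure_mono ?_) (torus_measure_bound L hδ)
      intro φ hφ x
      exact (hφ x).1
    have htop : ENNReal.ofReal (2 * δ) ^ (L * L - L) * ENNReal.ofReal (2 * π) ^ L ≠ ⊤ :=
      ENNReal.mul_ne_top (ENNReal.pow_ne_top ENNReal.ofReal_ne_top)
        (ENNReal.pow_ne_top ENNReal.ofReal_ne_top)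
    refine le_trans (ENNReal.toReal_mono htop hle) (le_of_eq ?_)
    rw [ENNReal.toReal_mul, ENNReal.toReal_pow, ENNReal.toReal_pow,
      ENNReal.toReal_ofReal (by positivity), ENNReal.toReal_ofReal (by positivity)]
  calc Zso L p β C ≤ (torusMeasure L S).toReal * Real.exp (2 * β * (L * L)) := h1
    _ ≤ ((2 * δ) ^ (L * L - L) * (2 * π) ^ L) * Real.exp (2 * β * (L * L)) :=
        mul_le_mul_of_nonneg_right h2 (Real.exp_pos _).le
    _ = Real.exp (2 * β * (L * L)) * ((2 * δ) ^ (L * L - L) * (2 * π) ^ L) := by ring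

lemma ratio_bound (L p : ℕ) [NeZero L] {β C : ℝ} (hβ : 0 ≤ β) (hC : 1 < C)
    (hsp : 0 < Real.sqrt p) :
    (Zso L p β C / Zfull L p β) ^ (((L : ℝ) ^ 2)⁻¹)
      ≤ Real.exp (2 * β) *
        ((1 / (C * Real.sqrt p)) / π) ^ (((L * L - L : ℕ) : ℝ) * (((L : ℝ)) ^ 2)⁻¹) := by
  have hπ : (0:ℝ) < π := Real.pi_pos
  have hC0 : (0:ℝ) < C := lt_trans one_pos hC
  set δ : ℝ := 1 / (C * Real.sqrt p) with hδdef
  have hδ0 : 0 < δ := by rw [hδdef]; positivity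
  set q : ℝ := δ / π with hqdef
  have hq0 : 0 < q := div_pos hδ0 hπ
  have hL1 : 1 ≤ L := Nat.one_le_iff_ne_zero.mpr (NeZero.ne L)
  have hLpos : (0:ℝ) < (L:ℝ) := by exact_mod_cast hL1
  have hLL : L ≤ L * L := Nat.le_mul_of_pos_left L (by omega)
  have hZf : (2 * π) ^ (L * L) ≤ Zfull L p β := Zfull_lower L p hβ
  have hZfpos : 0 < Zfull L p β := lt_of_lt_of_le (by positivity) hZf
  have hZs := Zso_upper L p hβ hδ0.le (C := C)
  have hratio : Zso L p β C / Zfull L p β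
      ≤ (Real.exp (2 * β * (L * L)) * ((2 * δ) ^ (L * L - L) * (2 * π) ^ L))
          / (2 * π) ^ (L * L) :=
    div_le_div₀ (by positivity) hZs (by positivity) hZf
  have hE : (Real.exp (2 * β * (L * L)) * ((2 * δ) ^ (L * L - L) * (2 * π) ^ L))
        / (2 * π) ^ (L * L)
      = Real.exp (2 * β * (L * L)) * q ^ (L * L - L) := by
    have hsplit : ((2:ℝ) * π) ^ (L * L) = (2 * π) ^ (L * L - L) * (2 * π) ^ L := by
      rw [← pow_add]; congr 1; omega
    have hqm : q ^ (L * L - L) = (2 * δ) ^ (L * L - L) / (2 * π) ^ (L * L - L) := by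
      rw [hqdef, div_pow, mul_pow, mul_pow (2:ℝ) π,
        mul_div_mul_left _ _ (pow_ne_zero _ two_ne_zero)]
    rw [hsplit, hqm]
    have h1 : ((2:ℝ) * π) ^ (L * L - L) ≠ 0 := by positivity
    have h2 : ((2:ℝ) * π) ^ L ≠ 0 := by positivity
    field_simp
  have hNcast : ((L : ℝ) ^ 2) = ((L * L : ℕ) : ℝ) := by push_cast; ring
  have hNne : ((L * L : ℕ) : ℝ) ≠ 0 := by positivity
  have h1 : (Zso L p β C / Zfull L p β) ^ (((L : ℝ) ^ 2)⁻¹)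
      ≤ (Real.exp (2 * β * (L * L)) * q ^ (L * L - L)) ^ (((L : ℝ) ^ 2)⁻¹) :=
    Real.rpow_le_rpow (div_nonneg (Zso_nonneg _ _ _ _) hZfpos.le)
      (le_of_le_of_eq hratio hE) (by positivity)
  refine le_trans h1 (le_of_eq ?_)
  rw [Real.mul_rpow (Real.exp_nonneg _) (pow_nonneg hq0.le _)]
  congr 1
  · rw [← Real.exp_mul]
    congr 1
    have hLne : (L:ℝ) ≠ 0 := ne_of_gt hLpos
    have h2 : ((L:ℝ) * (L:ℝ)) * (((L:ℝ) ^ 2)⁻¹) = 1 := by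
      rw [sq]
      field_simp
    calc 2 * β * ((L:ℝ) * (L:ℝ)) * (((L:ℝ) ^ 2)⁻¹)
        = 2 * β * (((L:ℝ) * (L:ℝ)) * (((L:ℝ) ^ 2)⁻¹)) := by ring
      _ = 2 * β := by rw [h2, mul_one]
  · rw [← Real.rpow_natCast q (L * L - L), ← Real.rpow_mul hq0.le]

/-- The disseminated strong-order probability
`𝔭_β(G_so) = lim_L (Z_L^{so}/Z_L)^{1/|T_L|}` satisfies
`𝔭_β(G_so) ≤ (1/π) e^{2β}/(C√p)`. -/
theorem pso_bound (p : ℕ) (hp : 1 ≤ p) (β C : ℝ)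
    (hβ : 0 ≤ β) (hC : 1 < C) (hCp : C ≤ Real.sqrt p) :
    limsup
        (fun k : ℕ =>
          (Zso (k + 1) p β C / Zfull (k + 1) p β) ^ ((((k : ℝ) + 1) ^ 2)⁻¹))
        atTop ≤
      (1 / π) * Real.exp (2 * β) / (C * Real.sqrt p) := by
  have hπ : (0:ℝ) < π := Real.pi_pos
  have hC0 : (0:ℝ) < C := lt_trans one_pos hC
  have hsp : (0:ℝ) < Real.sqrt p := lt_of_lt_of_le (lt_trans one_pos hC) hCp
  set δ : ℝ := 1 / (C * Real.sqrt p) with hδdef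
  have hδ0 : 0 < δ := by rw [hδdef]; positivity
  set q : ℝ := δ / π with hqdef
  have hq0 : 0 < q := div_pos hδ0 hπ
  set u : ℕ → ℝ := fun k =>
    (Zso (k + 1) p β C / Zfull (k + 1) p β) ^ ((((k : ℝ) + 1) ^ 2)⁻¹) with hudef
  set b : ℕ → ℝ := fun k =>
    Real.exp (2 * β) *
      q ^ ((((k + 1) * (k + 1) - (k + 1) : ℕ) : ℝ) * (((k : ℝ) + 1) ^ 2)⁻¹) with hbdef
  have key : ∀ k : ℕ, u k ≤ b k := by
    intro k
    have h := ratio_bound (k + 1) p hβ hC hsp (β := β) (C := C)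
    have hcast : (((k + 1 : ℕ)) : ℝ) = (k : ℝ) + 1 := by push_cast; ring
    rw [hcast] at h
    exact h
  have hu0 : ∀ k, 0 ≤ u k := by
    intro k
    apply Real.rpow_nonneg
    apply div_nonneg (Zso_nonneg _ _ _ _)
    exact le_trans (by positivity) (Zfull_lower (k + 1) p hβ)
  have hc : Tendsto
      (fun k : ℕ => (((k + 1) * (k + 1) - (k + 1) : ℕ) : ℝ) * (((k : ℝ) + 1) ^ 2)⁻¹)
      atTop (𝓝 1) := by
    have heq : ∀ k : ℕ, (((k + 1) * (k + 1) - (k + 1) : ℕ) : ℝ) * (((k : ℝ) + 1) ^ 2)⁻¹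
        = 1 - ((k : ℝ) + 1)⁻¹ := by
      intro k
      have h1 : (k + 1 : ℕ) ≤ (k + 1) * (k + 1) := Nat.le_mul_of_pos_left _ k.succ_pos
      rw [Nat.cast_sub h1]
      push_cast
      have hx : ((k : ℝ) + 1) ≠ 0 := by positivity
      field_simp
    simp_rw [heq]
    have h0 : Tendsto (fun k : ℕ => ((k : ℝ) + 1)⁻¹) atTop (𝓝 0) := by
      have := tendsto_one_div_add_atTop_nhds_zero_nat (𝕜 := ℝ)
      simpa [one_div] using this
    simpa using tendsto_const_nhds.sub h0
  have hb : Tendsto b atTop (𝓝 (Real.exp (2 * β) * q)) := by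
    have h2 : Tendsto
        (fun k : ℕ => q ^ ((((k + 1) * (k + 1) - (k + 1) : ℕ) : ℝ) * (((k : ℝ) + 1) ^ 2)⁻¹))
        atTop (𝓝 (q ^ (1:ℝ))) :=
      Filter.Tendsto.rpow tendsto_const_nhds hc (Or.inl hq0.ne')
    rw [Real.rpow_one] at h2
    exact h2.const_mul _
  calc limsup u atTop ≤ limsup b atTop :=
        limsup_le_limsup (Filter.Eventually.of_forall key)
          (isCoboundedUnder_le_of_le atTop hu0) hb.isBoundedUnder_le
    _ = Real.exp (2 * β) * q := hb.limsup_eq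
    _ = (1 / π) * Real.exp (2 * β) / (C * Real.sqrt p) := by
        rw [hqdef, hδdef]
        field_simp

end
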